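/- arXiv:1110.4721 — 2 statements merged into one kernel-verified Lean document; each statement's English description precedes it below -/
import Mathlib

section
/- (Collapse in rescaled time, intermediate regime.) Fix 1/2 < α < 1 and τ ∈ ℝ. Then lim_{N→∞} P_{N,α}(τ N^{1−α}) = ∏_{j=1}^{∞} cos²(2^{1−α}(1−α) τ / j^α), where the infinite product on the right converges. -/
open Real Filter Finset Topology

/-- Kac normalization `𝒩_α(N) = (2 ∑_{j=1}^{⌊N/2⌋} j^{−α})⁻¹`. -/
noncomputable def kacNorm (α : ℝ) (N : ℕ) : ℝ :=
  (2 * ∑ j ∈ Finset.Icc 1 (N / 2), (j : ℝ) ^ (-α))⁻¹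

/-- The relaxation product `P_{N,α}(t) = ∏_{j=1}^{⌊N/2⌋} cos²(2 𝒩_α(N) t j^{−α})`. -/
noncomputable def relaxProd (α : ℝ) (N : ℕ) (t : ℝ) : ℝ :=
  ∏ j ∈ Finset.Icc 1 (N / 2), Real.cos (2 * kacNorm α N * t * (j : ℝ) ^ (-α)) ^ 2


lemma auxSin (x y : ℝ) : |Real.sin x - Real.sin y| ≤ |x - y| := by
  rw [Real.sin_sub_sin]
  rw [abs_mul, abs_mul]
  have h1 : |Real.sin ((x - y) / 2)| ≤ |(x - y) / 2| := Real.abs_sin_le_abs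
  have h2 : |Real.cos ((x + y) / 2)| ≤ 1 := Real.abs_cos_le_one _
  have := mul_le_mul (mul_le_mul_of_nonneg_left h1 (by norm_num : (0:ℝ) ≤ |(2:ℝ)|)) h2
    (abs_nonneg _) (by positivity)
  calc |2| * |Real.sin ((x-y)/2)| * |Real.cos ((x+y)/2)| ≤ |(2:ℝ)| * |(x-y)/2| * 1 := this
    _ = |x - y| := by rw [mul_one, abs_div]; norm_num; ring

lemma auxA (x y : ℝ) : |Real.cos x ^ 2 - Real.cos y ^ 2| ≤ (|x| + |y|) * |x - y| := by
  have hx := Real.sin_sq_add_cos_sq x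
  have hy := Real.sin_sq_add_cos_sq y
  have h : Real.cos x ^ 2 - Real.cos y ^ 2 =
      (Real.sin y + Real.sin x) * (Real.sin y - Real.sin x) := by nlinarith
  rw [h, abs_mul]
  refine mul_le_mul ?_ ?_ (abs_nonneg _) (by positivity)
  · refine le_trans (abs_add_le _ _) ?_
    have := Real.abs_sin_le_abs (x := x)
    have := Real.abs_sin_le_abs (x := y)
    linarith
  · refine le_trans (auxSin y x) ?_
    rw [abs_sub_comm]

lemma auxB (f g : ℕ → ℝ) (s : Finset ℕ) :
    (∀ i ∈ s, |f i| ≤ 1) → (∀ i ∈ s, |g i| ≤ 1) →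
    |∏ i ∈ s, f i - ∏ i ∈ s, g i| ≤ ∑ i ∈ s, |f i - g i| := by
  induction s using Finset.induction_on with
  | empty => simp
  | @insert a s ha ih =>
    intro hf hg
    rw [Finset.prod_insert ha, Finset.prod_insert ha, Finset.sum_insert ha]
    have key : f a * ∏ i ∈ s, f i - g a * ∏ i ∈ s, g i
        = f a * (∏ i ∈ s, f i - ∏ i ∈ s, g i) + (f a - g a) * ∏ i ∈ s, g i := by ring
    rw [key]
    have h1 : |f a * (∏ i ∈ s, f i - ∏ i ∈ s, g i)| ≤ ∑ i ∈ s, |f i - g i| := by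
      rw [abs_mul]
      calc |f a| * |∏ i ∈ s, f i - ∏ i ∈ s, g i| ≤ 1 * |∏ i ∈ s, f i - ∏ i ∈ s, g i| :=
        mul_le_mul_of_nonneg_right (hf a (Finset.mem_insert_self a s)) (abs_nonneg _)
        _ = |∏ i ∈ s, f i - ∏ i ∈ s, g i| := one_mul _
        _ ≤ _ := ih (fun i hi => hf i (Finset.mem_insert_of_mem hi))
            (fun i hi => hg i (Finset.mem_insert_of_mem hi))
    have h2 : |(f a - g a) * ∏ i ∈ s, g i| ≤ |f a - g a| := by
      rw [abs_mul]
      have : |∏ i ∈ s, g i| ≤ 1 := by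
        rw [Finset.abs_prod]
        exact Finset.prod_le_one (fun i _ => abs_nonneg _)
          (fun i hi => hg i (Finset.mem_insert_of_mem hi))
      calc |f a - g a| * |∏ i ∈ s, g i| ≤ |f a - g a| * 1 :=
          mul_le_mul_of_nonneg_left this (abs_nonneg _)
        _ = _ := mul_one _
    calc |_ + _| ≤ _ + _ := abs_add_le _ _
      _ ≤ |f a - g a| + ∑ i ∈ s, |f i - g i| := by linarith

lemma sumC {p : ℝ} (hp : 1 < p) : Summable (fun j : ℕ => ((j : ℝ) + 1) ^ (-p)) := by
  have h0 : Summable (fun n : ℕ => (n : ℝ) ^ (-p)) :=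
    Real.summable_nat_rpow.mpr (by linarith)
  have h1 : Summable (fun n : ℕ => ((n + 1 : ℕ) : ℝ) ^ (-p)) :=
    (summable_nat_add_iff 1).mpr h0
  refine h1.congr (fun n => ?_)
  push_cast
  ring_nf

lemma logbound {x : ℝ} (hx : |x| ≤ 1) :
    0 ≤ -Real.log (Real.cos x ^ 2) ∧ -Real.log (Real.cos x ^ 2) ≤ 2 * x ^ 2 := by
  have hx2 : x ^ 2 ≤ 1 := by
    have := sq_abs x
    nlinarith [abs_nonneg x]
  have hq : 1 - x ^ 2 / 2 ≤ Real.cos x := Real.one_sub_sq_div_two_le_cos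
  have hcpos : (0 : ℝ) < Real.cos x := by nlinarith
  constructor
  · have : Real.log (Real.cos x ^ 2) ≤ 0 :=
      Real.log_nonpos (by positivity) (Real.cos_sq_le_one x)
    linarith
  · have hlog : Real.log (Real.cos x ^ 2) = 2 * Real.log (Real.cos x) := by
      rw [Real.log_pow]; norm_num
    have h1 : -Real.log (Real.cos x) = Real.log (Real.cos x)⁻¹ := (Real.log_inv _).symm
    have h2 : Real.log (Real.cos x)⁻¹ ≤ (Real.cos x)⁻¹ - 1 :=
      Real.log_le_sub_one_of_pos (by positivity)
    have h3 : (Real.cos x)⁻¹ - 1 ≤ x ^ 2 := by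
      rw [sub_le_iff_le_add, inv_le_iff_one_le_mul₀ hcpos]
      nlinarith
    rw [hlog]
    linarith

lemma hasProdZero {f : ℕ → ℝ} {j₀ : ℕ} (h : f j₀ = 0) : HasProd f 0 := by
  have hev : ∀ᶠ s : Finset ℕ in atTop, (fun t : Finset ℕ => (0:ℝ)) s = ∏ i ∈ s, f i := by
    filter_upwards [eventually_ge_atTop ({j₀} : Finset ℕ)] with s hs
    exact (Finset.prod_eq_zero (hs (Finset.mem_singleton_self j₀)) h).symm
  exact Filter.Tendsto.congr' hev tendsto_const_nhds

lemma multAux {α : ℝ} (hα0 : 1 / 2 < α) (hα1 : α < 1) (c : ℝ) :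
    Multipliable (fun j : ℕ => Real.cos (c * ((j : ℝ) + 1) ^ (-α)) ^ 2) := by
  set f : ℕ → ℝ := fun j => Real.cos (c * ((j : ℝ) + 1) ^ (-α)) ^ 2 with hf
  by_cases hzero : ∃ j₀, f j₀ = 0
  · obtain ⟨j₀, hj₀⟩ := hzero
    exact ⟨0, hasProdZero hj₀⟩
  push_neg at hzero
  have hpos : ∀ j, 0 < f j := fun j => lt_of_le_of_ne (sq_nonneg _) (Ne.symm (hzero j))
  have hαpos : (0 : ℝ) < α := by linarith
  have hu : Tendsto (fun j : ℕ => c * ((j : ℝ) + 1) ^ (-α)) atTop (𝓝 0) := by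
    have h1 : Tendsto (fun j : ℕ => (j : ℝ) + 1) atTop atTop :=
      tendsto_atTop_add_const_right _ 1 tendsto_natCast_atTop_atTop
    have h2 := (tendsto_rpow_neg_atTop hαpos).comp h1
    simpa using h2.const_mul c
  have habs : Tendsto (fun j : ℕ => |c * ((j : ℝ) + 1) ^ (-α)|) atTop (𝓝 0) := by
    simpa using hu.abs
  have hev : ∀ᶠ j : ℕ in atTop, |c * ((j : ℝ) + 1) ^ (-α)| ≤ 1 :=
    habs.eventually (gt_mem_nhds (by norm_num : (0:ℝ) < 1)) |>.mono fun j h => le_of_lt h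
  obtain ⟨k, hk⟩ := eventually_atTop.mp hev
  have hk' : ∀ j : ℕ, |c * (((j + k : ℕ) : ℝ) + 1) ^ (-α)| ≤ 1 := fun j => hk (j + k) le_add_self
  have hsq : ∀ j : ℕ, (c * (((j + k : ℕ) : ℝ) + 1) ^ (-α)) ^ 2
      ≤ c ^ 2 * (((j + k : ℕ) : ℝ) + 1) ^ (-(2 * α)) := by
    intro j
    have hb : (0:ℝ) < ((j + k : ℕ) : ℝ) + 1 := by positivity
    have : ((((j + k : ℕ) : ℝ) + 1) ^ (-α)) ^ 2 = (((j + k : ℕ) : ℝ) + 1) ^ (-(2 * α)) := by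
      rw [← Real.rpow_natCast ((((j + k : ℕ) : ℝ) + 1) ^ (-α)) 2, ← Real.rpow_mul hb.le]
      norm_num; ring_nf
    rw [mul_pow, this]
  have hsummand : Summable (fun j : ℕ => 2 * c ^ 2 * (((j + k : ℕ) : ℝ) + 1) ^ (-(2 * α))) := by
    have := (sumC (by linarith : (1:ℝ) < 2 * α)).mul_left (2 * c ^ 2)
    exact (summable_nat_add_iff k).mpr this
  have hneg : Summable (fun j : ℕ => -Real.log (f (j + k))) := by
    refine Summable.of_nonneg_of_le (fun j => (logbound (hk' j)).1) (fun j => ?_) hsummand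
    have h1 := (logbound (hk' j)).2
    have h2 := hsq j
    simp only [hf]
    nlinarith
  have hsumk : Summable (fun j : ℕ => Real.log (f (j + k))) := by simpa using hneg.neg
  have hsum : Summable (fun j : ℕ => Real.log (f j)) := (summable_nat_add_iff k).mp hsumk
  have hfe : f = Real.exp ∘ (fun j : ℕ => Real.log (f j)) :=
    funext fun j => (Real.exp_log (hpos j)).symm
  rw [hfe]
  exact ⟨_, hsum.hasSum.rexp⟩

lemma prodIcc (h : ℕ → ℝ) (M : ℕ) :
    ∏ j ∈ Finset.Icc 1 M, h j = ∏ i ∈ Finset.range M, h (1 + i) := by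
  rw [← Finset.Ico_add_one_right_eq_Icc, Finset.prod_Ico_eq_prod_range]
  simp

lemma sumIcc (g : ℕ → ℝ) (M : ℕ) :
    ∑ j ∈ Finset.Icc 1 M, g j = ∑ i ∈ Finset.range M, g (1 + i) := by
  rw [← Finset.Ico_add_one_right_eq_Icc, Finset.sum_Ico_eq_sum_range]
  simp

lemma sumAsymp {α : ℝ} (hα0 : 0 < α) (hα1 : α < 1) :
    Tendsto (fun M : ℕ => (∑ j ∈ Finset.Icc 1 M, (j:ℝ)^(-α)) / (M:ℝ)^(1-α)) atTop
      (𝓝 (1/(1-α))) := by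
  have h1α : (0:ℝ) < 1 - α := by linarith
  have hanti : ∀ M : ℕ, AntitoneOn (fun x:ℝ => x ^ (-α)) (Set.Icc 1 (1 + (M:ℝ))) := by
    intro M x hx y hy hxy
    have hx1 : (1:ℝ) ≤ x := hx.1
    have hxpos : (0:ℝ) < x := by linarith
    have h1 : x ^ α ≤ y ^ α := Real.rpow_le_rpow hxpos.le hxy hα0.le
    have hxa : (0:ℝ) < x ^ α := Real.rpow_pos_of_pos hxpos _
    show y ^ (-α) ≤ x ^ (-α)
    rw [Real.rpow_neg (by linarith : (0:ℝ) ≤ x), Real.rpow_neg (by linarith : (0:ℝ) ≤ y)]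
    exact inv_anti₀ hxa h1
  have hint : ∀ M : ℕ, ∫ x in (1:ℝ)..(1 + (M:ℝ)), x ^ (-α)
      = ((1+(M:ℝ))^(1-α) - 1)/(1-α) := by
    intro M
    rw [integral_rpow (Or.inl (by linarith : (-1:ℝ) < -α))]
    rw [Real.one_rpow]
    have e : -α + 1 = 1 - α := by ring
    rw [e]
  have hlow : ∀ M : ℕ, ((1+(M:ℝ))^(1-α) - 1)/(1-α) ≤ ∑ j ∈ Finset.Icc 1 M, (j:ℝ)^(-α) := by
    intro M
    have h := (hanti M).integral_le_sum
    rw [hint M] at h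
    refine le_trans h ?_
    rw [sumIcc (fun j : ℕ => (j:ℝ)^(-α)) M]
    refine le_of_eq (Finset.sum_congr rfl fun i _ => ?_)
    push_cast
    ring_nf
  have hup : ∀ M : ℕ, ∑ j ∈ Finset.Icc 1 M, (j:ℝ)^(-α)
      ≤ 1 + ((1+(M:ℝ))^(1-α) - 1)/(1-α) := by
    intro M
    have h := (hanti M).sum_le_integral
    rw [hint M] at h
    have key : ∑ j ∈ Finset.Icc 1 M, (j:ℝ)^(-α)
        ≤ 1 + ∑ i ∈ Finset.range M, ((1:ℝ) + ((i:ℕ)+1:ℕ)) ^ (-α) := by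
      rw [sumIcc (fun j : ℕ => (j:ℝ)^(-α)) M]
      cases M with
      | zero => simp
      | succ m =>
        rw [Finset.sum_range_succ' (fun i => ((1 + i : ℕ) : ℝ) ^ (-α)) m]
        have e1 : (((1 + 0 : ℕ) : ℝ)) ^ (-α) = 1 := by norm_num
        rw [e1]
        have heq : ∑ i ∈ Finset.range m, (((1 + (i+1) : ℕ) : ℝ)) ^ (-α)
            = ∑ i ∈ Finset.range m, ((1:ℝ) + ((i:ℕ)+1:ℕ)) ^ (-α) :=
          Finset.sum_congr rfl fun i _ => by push_cast; ring_nf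
        have hsub : ∑ i ∈ Finset.range m, ((1:ℝ) + ((i:ℕ)+1:ℕ)) ^ (-α)
            ≤ ∑ i ∈ Finset.range (m+1), ((1:ℝ) + ((i:ℕ)+1:ℕ)) ^ (-α) := by
          refine Finset.sum_le_sum_of_subset_of_nonneg
            (Finset.range_subset_range.mpr (Nat.le_succ m)) (fun i _ _ => ?_)
          positivity
        rw [heq]
        linarith
    refine le_trans key ?_
    have h2 : ∑ i ∈ Finset.range M, ((1:ℝ) + ((i:ℕ)+1:ℕ)) ^ (-α)
        ≤ ((1+(M:ℝ))^(1-α) - 1)/(1-α) := by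
      refine le_trans (le_of_eq ?_) h
      exact Finset.sum_congr rfl fun i _ => by push_cast; ring_nf
    linarith
  -- limits
  have hnat : Tendsto (fun M : ℕ => (M:ℝ)) atTop atTop := tendsto_natCast_atTop_atTop
  have hB : Tendsto (fun M : ℕ => ((M:ℝ)^(1-α))⁻¹) atTop (𝓝 0) := by
    have h0 := (tendsto_rpow_neg_atTop h1α).comp hnat
    refine h0.congr fun M => ?_
    simp only [Function.comp]
    exact Real.rpow_neg (Nat.cast_nonneg M) _
  have hA : Tendsto (fun M : ℕ => (1+(M:ℝ))^(1-α) / (M:ℝ)^(1-α)) atTop (𝓝 1) := by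
    have hinner : Tendsto (fun M : ℕ => (1+(M:ℝ))/(M:ℝ)) atTop (𝓝 1) := by
      have h0 : Tendsto (fun M : ℕ => (M:ℝ)⁻¹ + 1) atTop (𝓝 (0 + 1)) :=
        (tendsto_inv_atTop_zero.comp hnat).add tendsto_const_nhds
      rw [zero_add] at h0
      refine h0.congr' ?_
      filter_upwards [eventually_ge_atTop 1] with M hM
      have hM0 : (M:ℝ) ≠ 0 := by
        have : (0:ℝ) < (M:ℝ) := by exact_mod_cast Nat.pos_of_ne_zero (by omega)
        positivity
      field_simp
    have hcont := (Real.continuousAt_rpow_const 1 (1-α) (Or.inl one_ne_zero)).tendsto.comp hinner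
    rw [Real.one_rpow] at hcont
    refine hcont.congr' ?_
    filter_upwards [eventually_ge_atTop 1] with M hM
    have hM0 : (0:ℝ) ≤ (M:ℝ) := Nat.cast_nonneg M
    simp only [Function.comp]
    rw [Real.div_rpow (by positivity) hM0]
  have hg : Tendsto (fun M : ℕ => ((1+(M:ℝ))^(1-α) / (M:ℝ)^(1-α) - ((M:ℝ)^(1-α))⁻¹) * (1-α)⁻¹)
      atTop (𝓝 (1/(1-α))) := by
    have h0 := (hA.sub hB).mul_const (1-α)⁻¹
    have e : (1 - 0 : ℝ) * (1-α)⁻¹ = 1/(1-α) := by ring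
    rwa [e] at h0
  have hh : Tendsto (fun M : ℕ => ((M:ℝ)^(1-α))⁻¹
      + ((1+(M:ℝ))^(1-α) / (M:ℝ)^(1-α) - ((M:ℝ)^(1-α))⁻¹) * (1-α)⁻¹) atTop (𝓝 (1/(1-α))) := by
    have h0 := hB.add hg
    rwa [zero_add] at h0
  refine tendsto_of_tendsto_of_tendsto_of_le_of_le' hg hh ?_ ?_
  · filter_upwards [eventually_ge_atTop 1] with M hM
    have hMpos : (0:ℝ) < (M:ℝ) := by exact_mod_cast Nat.pos_of_ne_zero (by omega)
    have hY : (0:ℝ) < (M:ℝ)^(1-α) := Real.rpow_pos_of_pos hMpos _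
    have e : ((1+(M:ℝ))^(1-α) / (M:ℝ)^(1-α) - ((M:ℝ)^(1-α))⁻¹) * (1-α)⁻¹
        = (((1+(M:ℝ))^(1-α) - 1)/(1-α)) / (M:ℝ)^(1-α) := by
      simp only [div_eq_mul_inv]; ring
    rw [e]
    gcongr
    exact hlow M
  · filter_upwards [eventually_ge_atTop 1] with M hM
    have hMpos : (0:ℝ) < (M:ℝ) := by exact_mod_cast Nat.pos_of_ne_zero (by omega)
    have hY : (0:ℝ) < (M:ℝ)^(1-α) := Real.rpow_pos_of_pos hMpos _
    have e : ((1+(M:ℝ))^(1-α) / (M:ℝ)^(1-α) - ((M:ℝ)^(1-α))⁻¹) * (1-α)⁻¹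
        = (((1+(M:ℝ))^(1-α) - 1)/(1-α)) / (M:ℝ)^(1-α) := by
      simp only [div_eq_mul_inv]; ring
    have h3 : (∑ j ∈ Finset.Icc 1 M, (j:ℝ)^(-α)) / (M:ℝ)^(1-α)
        ≤ (1 + ((1+(M:ℝ))^(1-α) - 1)/(1-α)) / (M:ℝ)^(1-α) := by
      gcongr
      exact hup M
    rw [add_div, one_div] at h3
    rw [e]
    exact h3

lemma termEq (a b v : ℝ) (hv : 0 ≤ v) :
    (|a * v| + |b * v|) * |a * v - b * v| = (|a| + |b|) * |a - b| * v ^ 2 := by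
  rw [abs_mul, abs_mul, ← sub_mul, abs_mul, abs_of_nonneg hv]
  ring

lemma halfTendsto : Tendsto (fun N : ℕ => N / 2) atTop atTop :=
  tendsto_atTop_atTop.mpr fun b => ⟨2 * b, fun n h => by omega⟩

lemma ratioHalf : Tendsto (fun N : ℕ => ((N / 2 : ℕ) : ℝ) / (N : ℝ)) atTop (𝓝 (1 / 2)) := by
  have hnat : Tendsto (fun N : ℕ => (N : ℝ)) atTop atTop := tendsto_natCast_atTop_atTop
  have hlowlim : Tendsto (fun N : ℕ => 1 / 2 - 1 / (2 * (N : ℝ))) atTop (𝓝 (1 / 2)) := by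
    have h2N : Tendsto (fun N : ℕ => 2 * (N : ℝ)) atTop atTop :=
      Tendsto.const_mul_atTop two_pos hnat
    have h0 : Tendsto (fun N : ℕ => (2 * (N : ℝ))⁻¹) atTop (𝓝 0) :=
      tendsto_inv_atTop_zero.comp h2N
    have := (tendsto_const_nhds (x := (1/2:ℝ))).sub h0
    rw [sub_zero] at this
    exact this.congr fun N => by rw [one_div, one_div]
  refine tendsto_of_tendsto_of_tendsto_of_le_of_le' hlowlim tendsto_const_nhds ?_ ?_
  · filter_upwards [eventually_ge_atTop 1] with N hN
    have hNpos : (0:ℝ) < (N:ℝ) := by exact_mod_cast Nat.pos_of_ne_zero (by omega)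
    have hcast : (N : ℝ) ≤ 2 * ((N / 2 : ℕ) : ℝ) + 1 := by
      have : N ≤ 2 * (N / 2) + 1 := by omega
      exact_mod_cast this
    rw [le_div_iff₀ hNpos]
    have hf : (1 / 2 - 1 / (2 * (N : ℝ))) * (N : ℝ) = ((N : ℝ) - 1) / 2 := by
      field_simp
    rw [hf]
    linarith
  · filter_upwards [eventually_ge_atTop 1] with N hN
    have hNpos : (0:ℝ) < (N:ℝ) := by exact_mod_cast Nat.pos_of_ne_zero (by omega)
    have hcast : 2 * ((N / 2 : ℕ) : ℝ) ≤ (N : ℝ) := by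
      have : 2 * (N / 2) ≤ N := by omega
      exact_mod_cast this
    rw [div_le_iff₀ hNpos]
    linarith

lemma cNlim {α : ℝ} (hα0 : 1 / 2 < α) (hα1 : α < 1) (τ : ℝ) :
    Tendsto (fun N : ℕ => 2 * kacNorm α N * (τ * (N : ℝ) ^ (1 - α))) atTop
      (𝓝 ((2 : ℝ) ^ (1 - α) * (1 - α) * τ)) := by
  have hαpos : (0:ℝ) < α := by linarith
  have h1α : (0:ℝ) < 1 - α := by linarith
  have h1 := (sumAsymp hαpos hα1).comp halfTendsto
  simp only [Function.comp_def] at h1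
  have hrat2 : Tendsto (fun N : ℕ => (((N / 2 : ℕ) : ℝ)) ^ (1 - α) / (N : ℝ) ^ (1 - α)) atTop
      (𝓝 ((1 / 2 : ℝ) ^ (1 - α))) := by
    have hcont := (Real.continuousAt_rpow_const (1/2) (1-α)
      (Or.inl (by norm_num))).tendsto.comp ratioHalf
    refine hcont.congr fun N => ?_
    simp only [Function.comp]
    rw [Real.div_rpow (Nat.cast_nonneg _) (Nat.cast_nonneg _)]
  have hSN : Tendsto (fun N : ℕ => (∑ j ∈ Finset.Icc 1 (N / 2), (j:ℝ)^(-α)) / (N : ℝ) ^ (1 - α))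
      atTop (𝓝 (1 / (1 - α) * (1 / 2 : ℝ) ^ (1 - α))) := by
    have hmul := h1.mul hrat2
    refine hmul.congr' ?_
    filter_upwards [eventually_ge_atTop 2] with N hN
    have hM1 : 1 ≤ N / 2 := by omega
    have hMpos : (0:ℝ) < ((N / 2 : ℕ) : ℝ) := by exact_mod_cast Nat.pos_of_ne_zero (by omega)
    have hY : (0:ℝ) < ((N / 2 : ℕ) : ℝ) ^ (1 - α) := Real.rpow_pos_of_pos hMpos _
    rw [div_mul_div_comm, div_eq_div_iff (by positivity) ?_]
    · ring
    · have hNpos : (0:ℝ) < (N:ℝ) := by exact_mod_cast Nat.pos_of_ne_zero (by omega)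
      have := Real.rpow_pos_of_pos hNpos (1 - α)
      positivity
  have hepos : (0:ℝ) < 1 / (1 - α) * (1 / 2 : ℝ) ^ (1 - α) := by
    have := Real.rpow_pos_of_pos (by norm_num : (0:ℝ) < 1/2) (1 - α)
    positivity
  have hinv := hSN.inv₀ (ne_of_gt hepos)
  have hc := hinv.const_mul τ
  have hval : τ * (1 / (1 - α) * (1 / 2 : ℝ) ^ (1 - α))⁻¹ = (2 : ℝ) ^ (1 - α) * (1 - α) * τ := by
    rw [one_div, one_div, Real.inv_rpow (by norm_num : (0:ℝ) ≤ 2), mul_inv, inv_inv, inv_inv]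
    ring
  rw [hval] at hc
  refine hc.congr fun N => ?_
  simp only [kacNorm, inv_div, mul_inv, div_eq_mul_inv]
  rw [inv_inv]
  ring

/-- collapse in rescaled time, intermediate regime: for `1/2 < α < 1`,
`P_{N,α}(τ N^{1−α})` converges to the convergent infinite product
`∏_{j=1}^∞ cos²(2^{1−α}(1−α) τ / j^α)`. -/
theorem stmt_10 (α : ℝ) (hα0 : 1 / 2 < α) (hα1 : α < 1) (τ : ℝ) :
    Multipliable (fun j : ℕ =>
      Real.cos (2 ^ (1 - α) * (1 - α) * τ / ((j : ℝ) + 1) ^ α) ^ 2) ∧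
    Filter.Tendsto (fun N : ℕ => relaxProd α N (τ * (N : ℝ) ^ (1 - α))) Filter.atTop
      (nhds (∏' j : ℕ, Real.cos (2 ^ (1 - α) * (1 - α) * τ / ((j : ℝ) + 1) ^ α) ^ 2)) := by
  have hαpos : (0:ℝ) < α := by linarith
  set cL : ℝ := (2 : ℝ) ^ (1 - α) * (1 - α) * τ with hcL
  have hF : (fun j : ℕ => Real.cos (2 ^ (1 - α) * (1 - α) * τ / ((j : ℝ) + 1) ^ α) ^ 2)
      = fun j : ℕ => Real.cos (cL * ((j : ℝ) + 1) ^ (-α)) ^ 2 := by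
    funext j
    rw [Real.rpow_neg (by positivity : (0:ℝ) ≤ (j:ℝ) + 1), div_eq_mul_inv]
  have hmul : Multipliable (fun j : ℕ => Real.cos (cL * ((j : ℝ) + 1) ^ (-α)) ^ 2) :=
    multAux hα0 hα1 cL
  rw [hF]
  refine ⟨hmul, ?_⟩
  set u : ℕ → ℝ := fun i => ((i : ℝ) + 1) ^ (-α) with hu
  have hupos : ∀ i, 0 < u i := fun i => Real.rpow_pos_of_pos (by positivity) _
  set cN : ℕ → ℝ := fun N => 2 * kacNorm α N * (τ * (N : ℝ) ^ (1 - α)) with hcN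
  have hc : Tendsto cN atTop (𝓝 cL) := cNlim hα0 hα1 τ
  -- identify relaxProd with range-indexed product
  have hP : ∀ N : ℕ, relaxProd α N (τ * (N : ℝ) ^ (1 - α))
      = ∏ i ∈ Finset.range (N / 2), Real.cos (cN N * u i) ^ 2 := by
    intro N
    simp only [relaxProd]
    rw [prodIcc (fun j : ℕ => Real.cos (2 * kacNorm α N * (τ * (N : ℝ) ^ (1 - α))
      * (j : ℝ) ^ (-α)) ^ 2) (N / 2)]
    refine Finset.prod_congr rfl fun i _ => ?_
    have : ((1 + i : ℕ) : ℝ) = (i : ℝ) + 1 := by push_cast; ring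
    rw [this]
  -- summability of u²
  have hK : Summable (fun i : ℕ => ((i : ℝ) + 1) ^ (-(2 * α))) :=
    sumC (by linarith : (1:ℝ) < 2 * α)
  set K : ℝ := ∑' i : ℕ, ((i : ℝ) + 1) ^ (-(2 * α)) with hKdef
  have husq : ∀ i : ℕ, u i ^ 2 = ((i : ℝ) + 1) ^ (-(2 * α)) := by
    intro i
    have hb : (0:ℝ) < (i : ℝ) + 1 := by positivity
    rw [hu, ← Real.rpow_natCast (((i : ℝ) + 1) ^ (-α)) 2, ← Real.rpow_mul hb.le]
    norm_num
    ring_nf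
  have hsumu : ∀ M : ℕ, ∑ i ∈ Finset.range M, u i ^ 2 ≤ K := by
    intro M
    rw [hKdef]
    refine le_trans (le_of_eq (Finset.sum_congr rfl fun i _ => husq i)) ?_
    exact Summable.sum_le_tsum (Finset.range M) (fun i _ => by positivity) hK
  have hKnonneg : 0 ≤ K := by
    rw [hKdef]
    exact tsum_nonneg fun i => by positivity
  -- the error bound
  have hbound : ∀ N : ℕ,
      |∏ i ∈ Finset.range (N / 2), Real.cos (cN N * u i) ^ 2
        - ∏ i ∈ Finset.range (N / 2), Real.cos (cL * u i) ^ 2|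
      ≤ (|cN N| + |cL|) * |cN N - cL| * K := by
    intro N
    have h1 := auxB (fun i => Real.cos (cN N * u i) ^ 2) (fun i => Real.cos (cL * u i) ^ 2)
      (Finset.range (N / 2))
      (fun i _ => by rw [abs_of_nonneg (sq_nonneg _)]; exact Real.cos_sq_le_one _)
      (fun i _ => by rw [abs_of_nonneg (sq_nonneg _)]; exact Real.cos_sq_le_one _)
    refine le_trans h1 ?_
    have h2 : ∀ i ∈ Finset.range (N / 2),
        |Real.cos (cN N * u i) ^ 2 - Real.cos (cL * u i) ^ 2|
        ≤ (|cN N| + |cL|) * |cN N - cL| * u i ^ 2 := by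
      intro i _
      exact le_trans (auxA _ _) (le_of_eq (termEq (cN N) cL (u i) (hupos i).le))
    refine le_trans (Finset.sum_le_sum h2) ?_
    rw [← Finset.mul_sum]
    exact mul_le_mul_of_nonneg_left (hsumu _) (by positivity)
  -- limit of the bound
  have hblim : Tendsto (fun N : ℕ => (|cN N| + |cL|) * |cN N - cL| * K) atTop (𝓝 0) := by
    have h1 : Tendsto (fun N : ℕ => |cN N|) atTop (𝓝 |cL|) := hc.abs
    have h2 : Tendsto (fun N : ℕ => |cN N - cL|) atTop (𝓝 0) := by
      have := (hc.sub (tendsto_const_nhds (x := cL))).abs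
      simpa using this
    have h3 := ((h1.add (tendsto_const_nhds (x := |cL|))).mul h2).mul_const K
    simpa using h3
  have herr : Tendsto (fun N : ℕ =>
      ∏ i ∈ Finset.range (N / 2), Real.cos (cN N * u i) ^ 2
        - ∏ i ∈ Finset.range (N / 2), Real.cos (cL * u i) ^ 2) atTop (𝓝 0) := by
    refine squeeze_zero_norm (fun N => ?_) hblim
    rw [Real.norm_eq_abs]
    exact hbound N
  have hQ : Tendsto (fun M : ℕ => ∏ i ∈ Finset.range M, Real.cos (cL * u i) ^ 2) atTop
      (𝓝 (∏' j : ℕ, Real.cos (cL * ((j : ℝ) + 1) ^ (-α)) ^ 2)) :=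
    hmul.hasProd.tendsto_prod_nat
  have hQ2 := hQ.comp halfTendsto
  simp only [Function.comp_def] at hQ2
  have hfinal := herr.add hQ2
  rw [zero_add] at hfinal
  refine hfinal.congr fun N => ?_
  rw [sub_add_cancel, ← hP N]
end

section
/- (Relaxation to equilibrium in rescaled time; lifetime T₀ ∼ N^q with q = min{1/2, 1−α}.) Fix 0 ≤ α < 1 with α ≠ 1/2 and set q = min{1/2, 1−α}. Then the function τ ↦ limsup_{N→∞} P_{N,α}(τ N^{q}) tends to 0 as τ → ∞. -/
open Filter Real Finset

private lemma aux_sin_sq_quarter {x : ℝ} (hx : 0 < x) (hx2 : x ≤ 1/2) : x^2/4 ≤ Real.sin x ^ 2 := by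
  have h1 := Real.sin_gt_sub_cube hx
  have hsq : x^2 ≤ 1/4 := by nlinarith
  have h3 : x^3/4 ≤ x/16 := by nlinarith
  have h2 : x/2 ≤ Real.sin x := by linarith
  nlinarith [h2, hx.le]

private lemma aux_S_pos (α : ℝ) (M : ℕ) (hM : 1 ≤ M) :
    0 < ∑ j ∈ Finset.Icc 1 M, (j:ℝ)^(-α) := by
  apply Finset.sum_pos
  · intro j hj
    have : 1 ≤ j := (Finset.mem_Icc.mp hj).1
    exact Real.rpow_pos_of_pos (by exact_mod_cast this) _
  · exact ⟨1, Finset.mem_Icc.mpr ⟨le_refl 1, hM⟩⟩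

private lemma aux_S_upper (α : ℝ) (h0 : 0 ≤ α) (h1 : α < 1) (M : ℕ) (hM : 1 ≤ M) :
    ∑ j ∈ Finset.Icc 1 M, (j:ℝ)^(-α) ≤ 2/(1-α) * (M:ℝ)^(1-α) := by
  have hp : 0 < 1 - α := by linarith
  have hM1 : (1:ℝ) ≤ (M:ℝ) := by exact_mod_cast hM
  have hMp : (1:ℝ) ≤ (M:ℝ)^(1-α) := by
    calc (1:ℝ) = (1:ℝ)^(1-α) := (Real.one_rpow _).symm
    _ ≤ (M:ℝ)^(1-α) := Real.rpow_le_rpow zero_le_one hM1 hp.le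
  have key : ∑ j ∈ Finset.Icc 2 M, (j:ℝ)^(-α) ≤ ((M:ℝ)^(1-α) - 1)/(1-α) := by
    have hanti : AntitoneOn (fun x : ℝ => x ^ (-α)) (Set.Icc (1:ℝ) (1 + (M-1 : ℕ))) := by
      intro x hx y hy hxy
      exact Real.rpow_le_rpow_of_nonpos (lt_of_lt_of_le zero_lt_one hx.1) hxy (by linarith)
    have h2 := hanti.sum_le_integral
    have hint : ∫ x in (1:ℝ)..(1 + (M-1:ℕ)), x ^ (-α) =
        ((1 + ((M-1:ℕ):ℝ)) ^ (-α+1) - 1 ^ (-α+1)) / (-α + 1) := by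
      rw [integral_rpow (Or.inl (by linarith))]
    have hcast : (1:ℝ) + ((M-1:ℕ):ℝ) = (M:ℝ) := by
      have : ((M-1:ℕ):ℝ) = (M:ℝ) - 1 := by
        push_cast [Nat.cast_sub hM]; ring
      rw [this]; ring
    rw [hint, hcast] at h2
    have hsum : ∑ j ∈ Finset.Icc 2 M, (j:ℝ)^(-α)
        = ∑ i ∈ Finset.range (M-1), ((1:ℝ) + ((i+1:ℕ):ℝ)) ^ (-α) := by
      rw [show Finset.Icc 2 M = Finset.Ico 2 (M+1) by rw [Finset.Ico_add_one_right_eq_Icc],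
        Finset.sum_Ico_eq_sum_range]
      have : M + 1 - 2 = M - 1 := by omega
      rw [this]
      refine Finset.sum_congr rfl fun i _ => ?_
      push_cast; ring_nf
    rw [hsum]
    calc ∑ i ∈ Finset.range (M-1), ((1:ℝ) + ((i+1:ℕ):ℝ)) ^ (-α) ≤ _ := h2
    _ = ((M:ℝ)^(1-α) - 1)/(1-α) := by rw [Real.one_rpow]; ring_nf
  have hsplit : ∑ j ∈ Finset.Icc 1 M, (j:ℝ)^(-α)
      = (1:ℝ)^(-α) + ∑ j ∈ Finset.Icc 2 M, (j:ℝ)^(-α) := by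
    rw [show Finset.Icc 1 M = insert 1 (Finset.Icc 2 M) by
      ext x; simp [Finset.mem_Icc, Finset.mem_insert]; omega]
    rw [Finset.sum_insert (by simp)]
    norm_num
  rw [hsplit, Real.one_rpow]
  have : 1 + ((M:ℝ)^(1-α) - 1)/(1-α) ≤ 2/(1-α) * (M:ℝ)^(1-α) := by
    rw [div_mul_eq_mul_div, le_div_iff₀ hp, add_mul, div_mul_cancel₀ _ hp.ne']
    nlinarith [hMp]
  linarith [key]

private lemma aux_relaxProd_nonneg (α : ℝ) (N : ℕ) (t : ℝ) : 0 ≤ relaxProd α N t :=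
  Finset.prod_nonneg fun _ _ => sq_nonneg _

private lemma aux_relaxProd_le_one (α : ℝ) (N : ℕ) (t : ℝ) : relaxProd α N t ≤ 1 :=
  Finset.prod_le_one (fun _ _ => sq_nonneg _) fun j _ => by
    nlinarith [Real.neg_one_le_cos (2 * kacNorm α N * t * (j : ℝ) ^ (-α)),
      Real.cos_le_one (2 * kacNorm α N * t * (j : ℝ) ^ (-α))]

private lemma aux_relaxProd_le_exp (α : ℝ) (N : ℕ) (t : ℝ) (F : Finset ℕ)
    (hF : F ⊆ Finset.Icc 1 (N/2)) (B : ℝ)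
    (hB : ∀ j ∈ F, B ≤ Real.sin (2 * kacNorm α N * t * (j : ℝ) ^ (-α)) ^ 2) :
    relaxProd α N t ≤ Real.exp (-((F.card : ℝ) * B)) := by
  set c : ℕ → ℝ := fun j => 2 * kacNorm α N * t * (j : ℝ) ^ (-α) with hc
  have step1 : relaxProd α N t ≤ ∏ j ∈ F, Real.cos (c j) ^ 2 := by
    rw [relaxProd, ← Finset.prod_sdiff hF]
    have h1 : ∏ j ∈ Finset.Icc 1 (N/2) \ F, Real.cos (c j) ^ 2 ≤ 1 :=
      Finset.prod_le_one (fun _ _ => sq_nonneg _) fun j _ => by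
        nlinarith [Real.neg_one_le_cos (c j), Real.cos_le_one (c j)]
    nlinarith [Finset.prod_nonneg (fun j (_ : j ∈ F) => sq_nonneg (Real.cos (c j))),
      Finset.prod_nonneg (fun j (_ : j ∈ Finset.Icc 1 (N/2) \ F) => sq_nonneg (Real.cos (c j)))]
  have step2 : ∏ j ∈ F, Real.cos (c j) ^ 2 ≤ ∏ j ∈ F, Real.exp (-(Real.sin (c j) ^ 2)) := by
    apply Finset.prod_le_prod (fun _ _ => sq_nonneg _)
    intro j _
    have := Real.add_one_le_exp (-(Real.sin (c j) ^ 2))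
    have hcs : Real.cos (c j) ^ 2 = 1 - Real.sin (c j) ^ 2 := Real.cos_sq' (c j)
    linarith
  have step3 : ∏ j ∈ F, Real.exp (-(Real.sin (c j) ^ 2)) = Real.exp (∑ j ∈ F, -(Real.sin (c j)^2)) :=
    (Real.exp_sum F _).symm
  have step4 : Real.exp (∑ j ∈ F, -(Real.sin (c j)^2)) ≤ Real.exp (-((F.card : ℝ) * B)) := by
    apply Real.exp_le_exp.mpr
    have : (F.card : ℝ) * B = ∑ _j ∈ F, B := by rw [Finset.sum_const, nsmul_eq_mul]
    rw [this, ← Finset.sum_neg_distrib]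
    exact Finset.sum_le_sum fun j hj => neg_le_neg (hB j hj)
  calc relaxProd α N t ≤ _ := step1
    _ ≤ _ := step2
    _ = _ := step3
    _ ≤ _ := step4

private lemma aux_S_lower (α : ℝ) (h0 : 0 ≤ α) (M : ℕ) (hM : 1 ≤ M) :
    (M:ℝ)^(1-α) ≤ ∑ j ∈ Finset.Icc 1 M, (j:ℝ)^(-α) := by
  have hA0 : (0:ℝ) < M := by exact_mod_cast hM
  have h1 : ∀ j ∈ Finset.Icc 1 M, (M:ℝ)^(-α) ≤ (j:ℝ)^(-α) := by
    intro j hj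
    obtain ⟨hj1, hjM⟩ := Finset.mem_Icc.mp hj
    have hj0 : (0:ℝ) < j := by exact_mod_cast hj1
    have hjM' : (j:ℝ) ≤ M := by exact_mod_cast hjM
    exact Real.rpow_le_rpow_of_nonpos hj0 hjM' (by linarith)
  have h2 := Finset.card_nsmul_le_sum (Finset.Icc 1 M) _ _ h1
  rw [Nat.card_Icc] at h2
  have hcard : M + 1 - 1 = M := by omega
  rw [hcard, nsmul_eq_mul] at h2
  calc (M:ℝ)^(1-α) = (M:ℝ)^(1:ℝ) * (M:ℝ)^(-α) := by
        rw [← Real.rpow_add hA0]; ring_nf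
    _ = (M:ℝ) * (M:ℝ)^(-α) := by rw [Real.rpow_one]
    _ ≤ _ := h2

set_option maxHeartbeats 1000000 in
private lemma aux_caseA (α : ℝ) (h0 : 0 ≤ α) (hhalf : α < 1/2) (τ : ℝ) (hτ : 1 ≤ τ) :
    ∀ᶠ N : ℕ in atTop,
      relaxProd α N (τ * (N:ℝ)^((1:ℝ)/2)) ≤ Real.exp (-((1-α)^2/8 * τ^2)) := by
  have h1 : α < 1 := by linarith
  have hp : 0 < 1 - α := by linarith
  have hτ0 : 0 < τ := by linarith
  have htend : Tendsto (fun N : ℕ => 3*τ*(N:ℝ)^(α - 1/2)) atTop (nhds 0) := by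
    have h := (tendsto_rpow_neg_atTop (y := 1/2 - α) (by linarith)).comp
      (tendsto_natCast_atTop_atTop (R := ℝ))
    have h2 : (fun N : ℕ => 3*τ*(N:ℝ)^(α - 1/2))
        = fun N : ℕ => 3*τ*((fun x : ℝ => x^(-(1/2 - α))) ((N:ℕ):ℝ)) := by
      funext N; ring_nf
    rw [h2]
    simpa using h.const_mul (3*τ)
  have hev : ∀ᶠ N : ℕ in atTop, 3*τ*(N:ℝ)^(α - 1/2) ≤ 1/2 :=
    htend.eventually_le_const (by norm_num)
  filter_upwards [hev, eventually_ge_atTop 2] with N hsmall hN2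
  set M := N / 2 with hMdef
  have hM1 : 1 ≤ M := by omega
  have hA0 : (0:ℝ) < M := by exact_mod_cast hM1
  have hN0 : (0:ℝ) < N := by positivity
  set S := ∑ j ∈ Finset.Icc 1 M, (j:ℝ)^(-α) with hSdef
  have hSpos : 0 < S := aux_S_pos α M hM1
  have hSup : S ≤ 2/(1-α) * (M:ℝ)^(1-α) := aux_S_upper α h0 h1 M hM1
  have hSlow : (M:ℝ)^(1-α) ≤ S := aux_S_lower α h0 M hM1
  set t := τ * (N:ℝ)^((1:ℝ)/2) with htdef
  have ht0 : 0 < t := by positivity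
  have hApow : (0:ℝ) < (M:ℝ)^(1-α) := Real.rpow_pos_of_pos hA0 _
  have harg : ∀ j : ℕ, 2 * kacNorm α N * t * (j:ℝ)^(-α) = t / S * (j:ℝ)^(-α) := by
    intro j
    rw [kacNorm, ← hMdef, ← hSdef]
    field_simp
  have hN3 : (N:ℝ) ≤ 3 * (M:ℝ) := by
    have : N ≤ 3 * M := by omega
    exact_mod_cast this
  have h2M : 2 * (M:ℝ) ≤ (N:ℝ) := by
    have : 2 * M ≤ N := by omega
    exact_mod_cast this
  have hc_half : t / S ≤ 1/2 := by
    have step1 : t / S ≤ t / (M:ℝ)^(1-α) :=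
      div_le_div_of_nonneg_left ht0.le hApow hSlow
    have h3p : (3:ℝ)^(1-α) ≤ 3 := by
      calc (3:ℝ)^(1-α) ≤ (3:ℝ)^(1:ℝ) :=
        Real.rpow_le_rpow_of_exponent_le (by norm_num) (by linarith)
      _ = 3 := Real.rpow_one 3
    have hNM : ((N:ℝ)/3)^(1-α) ≤ (M:ℝ)^(1-α) :=
      Real.rpow_le_rpow (by positivity) (by linarith) hp.le
    have hdiv : ((N:ℝ)/3)^(1-α) = (N:ℝ)^(1-α)/(3:ℝ)^(1-α) :=
      Real.div_rpow hN0.le (by norm_num) _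
    have h3ppos : (0:ℝ) < (3:ℝ)^(1-α) := Real.rpow_pos_of_pos (by norm_num) _
    have hNppos : (0:ℝ) < (N:ℝ)^(1-α) := Real.rpow_pos_of_pos hN0 _
    have hNp3 : (N:ℝ)^(1-α)/3 ≤ (M:ℝ)^(1-α) := by
      calc (N:ℝ)^(1-α)/3 ≤ (N:ℝ)^(1-α)/(3:ℝ)^(1-α) := by
            apply div_le_div_of_nonneg_left hNppos.le h3ppos h3p
        _ = ((N:ℝ)/3)^(1-α) := hdiv.symm
        _ ≤ (M:ℝ)^(1-α) := hNM
    have step2 : t / (M:ℝ)^(1-α) ≤ t / ((N:ℝ)^(1-α)/3) :=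
      div_le_div_of_nonneg_left ht0.le (by positivity) hNp3
    have hmul : (N:ℝ)^(α-1/2) * (N:ℝ)^(1-α) = (N:ℝ)^((1:ℝ)/2) := by
      rw [← Real.rpow_add hN0]; norm_num
    have step3 : t / ((N:ℝ)^(1-α)/3) = 3*τ*(N:ℝ)^(α-1/2) := by
      rw [htdef, div_div_eq_mul_div, div_eq_iff hNppos.ne']
      linear_combination (-3*τ) * hmul
    linarith [step1, step2.trans_eq step3]
  -- lower bound L for the arguments
  set X := (M:ℝ)^(1-α) with hXdef
  set Y := (M:ℝ)^(-α) with hYdef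
  have hY0 : 0 < Y := Real.rpow_pos_of_pos hA0 _
  set L := t * (1-α) / (2 * X) * Y with hLdef
  have hL0 : 0 < L := by positivity
  have hB : ∀ j ∈ Finset.Icc 1 M, L^2/4 ≤ Real.sin (2 * kacNorm α N * t * (j:ℝ)^(-α)) ^ 2 := by
    intro j hj
    obtain ⟨hj1, hjM⟩ := Finset.mem_Icc.mp hj
    have hj0 : (0:ℝ) < j := by exact_mod_cast hj1
    have hj1' : (1:ℝ) ≤ j := by exact_mod_cast hj1
    have hjM' : (j:ℝ) ≤ M := by exact_mod_cast hjM
    rw [harg j]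
    have hja : 0 < (j:ℝ)^(-α) := Real.rpow_pos_of_pos hj0 _
    have hja1 : (j:ℝ)^(-α) ≤ 1 :=
      Real.rpow_le_one_of_one_le_of_nonpos hj1' (by linarith)
    have hcj0 : 0 < t / S * (j:ℝ)^(-α) := by positivity
    have hcjhalf : t / S * (j:ℝ)^(-α) ≤ 1/2 := by
      calc t / S * (j:ℝ)^(-α) ≤ t / S * 1 :=
        mul_le_mul_of_nonneg_left hja1 (by positivity)
      _ = t / S := mul_one _
      _ ≤ 1/2 := hc_half
    have hYj : Y ≤ (j:ℝ)^(-α) :=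
      Real.rpow_le_rpow_of_nonpos hj0 hjM' (by linarith)
    have hts : t * (1-α) / (2 * X) ≤ t / S := by
      have hq : t / (2/(1-α) * X) ≤ t / S :=
        div_le_div_of_nonneg_left ht0.le hSpos hSup
      have he : t / (2/(1-α) * X) = t * (1-α) / (2 * X) := by
        field_simp
      linarith [he ▸ hq]
    have hLcj : L ≤ t / S * (j:ℝ)^(-α) := by
      rw [hLdef]
      apply mul_le_mul hts hYj hY0.le (by positivity)
    have hsq : L^2 ≤ (t / S * (j:ℝ)^(-α))^2 := by
      apply pow_le_pow_left₀ hL0.le hLcj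
    calc L^2/4 ≤ (t / S * (j:ℝ)^(-α))^2/4 := by linarith
      _ ≤ _ := aux_sin_sq_quarter hcj0 hcjhalf
  have happ := aux_relaxProd_le_exp α N t (Finset.Icc 1 M) (by rw [hMdef]) (L^2/4) hB
  have hcard : ((Finset.Icc 1 M).card : ℝ) = M := by
    rw [Nat.card_Icc]; push_cast [Nat.add_sub_cancel]; ring
  rw [hcard] at happ
  -- final computation
  have hpow1 : ((N:ℝ)^((1:ℝ)/2))^2 = N := by
    rw [← Real.rpow_natCast ((N:ℝ)^((1:ℝ)/2)) 2, ← Real.rpow_mul hN0.le]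
    norm_num
  have ht2 : t^2 = τ^2 * N := by rw [htdef, mul_pow, hpow1]
  have hkey : (M:ℝ) * Y^2 / X^2 = ((M:ℝ))⁻¹ := by
    have e1 : Y^2 = (M:ℝ)^(-α*(2:ℝ)) := by
      rw [hYdef, ← Real.rpow_natCast ((M:ℝ)^(-α)) 2, ← Real.rpow_mul hA0.le]
      norm_num
    have e2 : X^2 = (M:ℝ)^((1-α)*(2:ℝ)) := by
      rw [hXdef, ← Real.rpow_natCast ((M:ℝ)^(1-α)) 2, ← Real.rpow_mul hA0.le]
      norm_num
    have e3 : (M:ℝ) * (M:ℝ)^(-α*(2:ℝ)) = (M:ℝ)^(1 + -α*(2:ℝ)) := by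
      rw [Real.rpow_add hA0, Real.rpow_one]
    have e4 : (M:ℝ)^(1 + -α*(2:ℝ)) / (M:ℝ)^((1-α)*(2:ℝ))
        = (M:ℝ)^(1 + -α*(2:ℝ) - (1-α)*(2:ℝ)) := by
      rw [← Real.rpow_sub hA0]
    have e5 : (1:ℝ) + -α*(2:ℝ) - (1-α)*(2:ℝ) = -1 := by ring
    rw [e1, e2, e3, e4, e5, Real.rpow_neg_one]
  have hNM2 : 2 ≤ (N:ℝ) * (M:ℝ)⁻¹ := by
    rw [← div_eq_mul_inv, le_div_iff₀ hA0]; linarith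
  have key2 : (M:ℝ) * (L^2/4) = τ^2*(1-α)^2/16 * ((N:ℝ)*(M:ℝ)⁻¹) := by
    have e1 : (M:ℝ) * (L^2/4) = t^2*(1-α)^2/16 * ((M:ℝ)*Y^2/X^2) := by
      rw [hLdef]; ring
    rw [e1, hkey, ht2]; ring
  have hfin : (1-α)^2/8 * τ^2 ≤ (M:ℝ) * (L^2/4) := by
    rw [key2]
    nlinarith [hNM2, mul_nonneg (sq_nonneg τ) (sq_nonneg (1-α))]
  calc relaxProd α N t ≤ _ := happ
    _ ≤ Real.exp (-((1-α)^2/8 * τ^2)) := by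
      apply Real.exp_le_exp.mpr; linarith

set_option maxHeartbeats 1000000 in
private lemma aux_caseB (α : ℝ) (hhalf : 1/2 < α) (h1 : α < 1) (τ : ℝ) (hτ : 1 ≤ τ) :
    ∀ᶠ N : ℕ in atTop,
      relaxProd α N (τ * (N:ℝ)^(1-α)) ≤ Real.exp (-((1-α)^2/9216 * (6*τ)^(α⁻¹))) := by
  have h0 : 0 ≤ α := by linarith
  have hα0 : 0 < α := by linarith
  have hp : 0 < 1 - α := by linarith
  have hτ0 : 0 < τ := by linarith
  set x := (6*τ)^(α⁻¹) with hxdef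
  have h6τ : (1:ℝ) ≤ 6*τ := by linarith
  have hx1 : (1:ℝ) ≤ x := Real.one_le_rpow h6τ (by positivity)
  have hx0 : (0:ℝ) < x := by linarith
  set J := ⌈x⌉₊ with hJdef
  have hJ1 : 1 ≤ J := Nat.one_le_ceil_iff.mpr (by linarith)
  have hJx : x ≤ (J:ℝ) := Nat.le_ceil x
  have hJx1 : (J:ℝ) ≤ 2*x := by
    have := Nat.ceil_lt_add_one hx0.le
    linarith
  filter_upwards [eventually_ge_atTop (4*J), eventually_ge_atTop 2] with N hNJ hN2
  set M := N / 2 with hMdef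
  have hM1 : 1 ≤ M := by omega
  have h2JM : 2*J ≤ M := by omega
  have hA0 : (0:ℝ) < M := by exact_mod_cast hM1
  have hN0 : (0:ℝ) < N := by positivity
  set S := ∑ j ∈ Finset.Icc 1 M, (j:ℝ)^(-α) with hSdef
  have hSpos : 0 < S := aux_S_pos α M hM1
  have hSup : S ≤ 2/(1-α) * (M:ℝ)^(1-α) := aux_S_upper α h0 h1 M hM1
  have hSlow : (M:ℝ)^(1-α) ≤ S := aux_S_lower α h0 M hM1
  set t := τ * (N:ℝ)^(1-α) with htdef
  have ht0 : 0 < t := by positivity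
  have hApow : (0:ℝ) < (M:ℝ)^(1-α) := Real.rpow_pos_of_pos hA0 _
  have harg : ∀ j : ℕ, 2 * kacNorm α N * t * (j:ℝ)^(-α) = t / S * (j:ℝ)^(-α) := by
    intro j
    rw [kacNorm, ← hMdef, ← hSdef]
    field_simp
  have hN3 : (N:ℝ) ≤ 3 * (M:ℝ) := by
    have : N ≤ 3 * M := by omega
    exact_mod_cast this
  have hMN : (M:ℝ) ≤ (N:ℝ) := by
    have : M ≤ N := by omega
    exact_mod_cast this
  -- t / S ≤ 3τ and t/S ≥ τ(1-α)/2
  have hts_up : t / S ≤ 3*τ := by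
    have hNp : (N:ℝ)^(1-α) ≤ 3 * (M:ℝ)^(1-α) := by
      calc (N:ℝ)^(1-α) ≤ (3*(M:ℝ))^(1-α) := Real.rpow_le_rpow hN0.le hN3 hp.le
        _ = (3:ℝ)^(1-α) * (M:ℝ)^(1-α) := Real.mul_rpow (by norm_num) hA0.le
        _ ≤ 3 * (M:ℝ)^(1-α) := by
            have : (3:ℝ)^(1-α) ≤ 3 := by
              calc (3:ℝ)^(1-α) ≤ (3:ℝ)^(1:ℝ) :=
                Real.rpow_le_rpow_of_exponent_le (by norm_num) (by linarith)
              _ = 3 := Real.rpow_one 3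
            nlinarith [hApow]
    calc t / S ≤ t / (M:ℝ)^(1-α) := div_le_div_of_nonneg_left ht0.le hApow hSlow
      _ ≤ 3*τ := by
          rw [div_le_iff₀ hApow, htdef]
          nlinarith [hNp, hτ0]
  have hts_low : τ*(1-α)/2 ≤ t / S := by
    have hq : t / (2/(1-α) * (M:ℝ)^(1-α)) ≤ t / S :=
      div_le_div_of_nonneg_left ht0.le hSpos hSup
    have he : t / (2/(1-α) * (M:ℝ)^(1-α)) = t * (1-α) / (2 * (M:ℝ)^(1-α)) := by
      field_simp
    have hNpM : (M:ℝ)^(1-α) ≤ (N:ℝ)^(1-α) := Real.rpow_le_rpow hA0.le hMN hp.le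
    have : τ*(1-α)/2 ≤ t * (1-α) / (2 * (M:ℝ)^(1-α)) := by
      rw [htdef, div_le_div_iff₀ (by norm_num) (by positivity)]
      nlinarith [mul_le_mul_of_nonneg_left hNpM (by positivity : (0:ℝ) ≤ 2*τ*(1-α))]
    linarith [he ▸ hq]
  -- pointwise bound on F = Icc (J+1) (2J)
  set w := (2*(J:ℝ))^(-α) with hwdef
  have hw0 : 0 < w := Real.rpow_pos_of_pos (by positivity) _
  set L := τ*(1-α)/2 * w with hLdef
  have hL0 : 0 < L := by positivity
  have hxinv : x^(-α) = (6*τ)⁻¹ := by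
    rw [hxdef, ← Real.rpow_mul (by positivity)]
    have : α⁻¹ * (-α) = -1 := by field_simp
    rw [this, Real.rpow_neg_one]
  have hB : ∀ j ∈ Finset.Icc (J+1) (2*J), L^2/4 ≤
      Real.sin (2 * kacNorm α N * t * (j:ℝ)^(-α)) ^ 2 := by
    intro j hj
    obtain ⟨hjl, hjr⟩ := Finset.mem_Icc.mp hj
    have hj0 : (0:ℝ) < j := by
      have : 1 ≤ j := by omega
      exact_mod_cast this
    have hjx : x ≤ (j:ℝ) := by
      have : (J:ℝ) ≤ j := by exact_mod_cast (by omega : J ≤ j)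
      linarith
    have hjup : (j:ℝ) ≤ 2*(J:ℝ) := by exact_mod_cast hjr
    rw [harg j]
    have hja0 : 0 < (j:ℝ)^(-α) := Real.rpow_pos_of_pos hj0 _
    have hcj0 : 0 < t / S * (j:ℝ)^(-α) := by positivity
    -- upper bound: c_j ≤ 3τ * (6τ)⁻¹ = 1/2
    have hjinv : (j:ℝ)^(-α) ≤ (6*τ)⁻¹ := by
      calc (j:ℝ)^(-α) ≤ x^(-α) :=
        Real.rpow_le_rpow_of_nonpos hx0 hjx (by linarith)
      _ = (6*τ)⁻¹ := hxinv
    have hcjhalf : t / S * (j:ℝ)^(-α) ≤ 1/2 := by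
      have h1' : t / S * (j:ℝ)^(-α) ≤ 3*τ * (6*τ)⁻¹ := by
        apply mul_le_mul hts_up hjinv hja0.le (by positivity)
      have h2' : 3*τ * (6*τ)⁻¹ = 1/2 := by field_simp; ring
      linarith
    -- lower bound: c_j ≥ L
    have hwj : w ≤ (j:ℝ)^(-α) :=
      Real.rpow_le_rpow_of_nonpos hj0 hjup (by linarith)
    have hLcj : L ≤ t / S * (j:ℝ)^(-α) := by
      rw [hLdef]
      apply mul_le_mul hts_low hwj hw0.le (by positivity)
    have hsq : L^2 ≤ (t / S * (j:ℝ)^(-α))^2 := by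
      apply pow_le_pow_left₀ hL0.le hLcj
    calc L^2/4 ≤ (t / S * (j:ℝ)^(-α))^2/4 := by linarith
      _ ≤ _ := aux_sin_sq_quarter hcj0 hcjhalf
  have hFsub : Finset.Icc (J+1) (2*J) ⊆ Finset.Icc 1 (N/2) := by
    intro j hj
    obtain ⟨hjl, hjr⟩ := Finset.mem_Icc.mp hj
    exact Finset.mem_Icc.mpr ⟨by omega, by omega⟩
  have happ := aux_relaxProd_le_exp α N t (Finset.Icc (J+1) (2*J)) hFsub (L^2/4) hB
  have hcard : (((Finset.Icc (J+1) (2*J)).card : ℕ) : ℝ) = (J:ℝ) := by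
    rw [Nat.card_Icc]
    have : 2*J + 1 - (J+1) = J := by omega
    rw [this]
  rw [hcard] at happ
  -- final: (1-α)^2/9216 * x ≤ J * (L^2/4)
  have hw_low : (6*τ)⁻¹/4 ≤ w := by
    have h2J4x : 2*(J:ℝ) ≤ 4*x := by linarith
    have hstep : (4*x)^(-α) ≤ w := by
      rw [hwdef]
      exact Real.rpow_le_rpow_of_nonpos (by positivity) h2J4x (by linarith)
    have hform : (4*x)^(-α) = (4:ℝ)^(-α) * x^(-α) := Real.mul_rpow (by norm_num) hx0.le
    have h4 : (4:ℝ)⁻¹ ≤ (4:ℝ)^(-α) := by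
      calc (4:ℝ)⁻¹ = (4:ℝ)^(-1:ℝ) := by rw [Real.rpow_neg_one]
        _ ≤ (4:ℝ)^(-α) := Real.rpow_le_rpow_of_exponent_le (by norm_num) (by linarith)
    have hxinv_pos : (0:ℝ) < (6*τ)⁻¹ := by positivity
    calc (6*τ)⁻¹/4 = (4:ℝ)⁻¹ * (6*τ)⁻¹ := by ring
      _ ≤ (4:ℝ)^(-α) * x^(-α) := by
          rw [hxinv]
          apply mul_le_mul h4 le_rfl hxinv_pos.le (by positivity)
      _ = (4*x)^(-α) := hform.symm
      _ ≤ w := hstep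
  have hL_low : (1-α)/48 ≤ L := by
    have : τ*(1-α)/2 * ((6*τ)⁻¹/4) = (1-α)/48 := by field_simp; ring
    calc (1-α)/48 = τ*(1-α)/2 * ((6*τ)⁻¹/4) := this.symm
      _ ≤ τ*(1-α)/2 * w := by
          apply mul_le_mul_of_nonneg_left hw_low (by positivity)
      _ = L := hLdef.symm
  have hfin : (1-α)^2/9216 * x ≤ (J:ℝ) * (L^2/4) := by
    have hL2 : ((1-α)/48)^2 ≤ L^2 := pow_le_pow_left₀ (by positivity) hL_low 2
    have : (1-α)^2/9216 * x ≤ x * (((1-α)/48)^2/4) := by ring_nf; nlinarith [hx0]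
    calc (1-α)^2/9216 * x ≤ x * (((1-α)/48)^2/4) := this
      _ ≤ (J:ℝ) * (L^2/4) := by
          apply mul_le_mul hJx (by linarith) (by positivity) (by positivity)
  calc relaxProd α N t ≤ _ := happ
    _ ≤ Real.exp (-((1-α)^2/9216 * x)) := by
      apply Real.exp_le_exp.mpr; linarith

/-- relaxation in rescaled time; lifetime `T₀ ∼ N^q`, `q = min{1/2, 1−α}`:
for `0 ≤ α < 1`, `α ≠ 1/2`, the function `τ ↦ limsup_{N→∞} P_{N,α}(τ N^q)` tends to `0`
as `τ → ∞`. -/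
theorem stmt_11 (α : ℝ) (hα0 : 0 ≤ α) (hα1 : α < 1) (hα2 : α ≠ 1 / 2)
    (q : ℝ) (hq : q = min (1 / 2) (1 - α)) :
    Filter.Tendsto
      (fun τ : ℝ => Filter.limsup (fun N : ℕ => relaxProd α N (τ * (N : ℝ) ^ q)) Filter.atTop)
      Filter.atTop (nhds 0) := by
  have hL0 : ∀ τ : ℝ, (0:ℝ) ≤ Filter.limsup (fun N : ℕ => relaxProd α N (τ * (N : ℝ) ^ q)) Filter.atTop := by
    intro τ
    apply Filter.le_limsup_of_frequently_le
    · exact Frequently.of_forall fun N => aux_relaxProd_nonneg α N _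
    · exact ⟨1, Filter.eventually_map.2 (Eventually.of_forall fun N => aux_relaxProd_le_one α N _)⟩
  have hcob : ∀ τ : ℝ, Filter.IsCoboundedUnder (· ≤ ·) Filter.atTop
      (fun N : ℕ => relaxProd α N (τ * (N : ℝ) ^ q)) := fun τ =>
    Filter.isCoboundedUnder_le_of_le Filter.atTop (fun N => aux_relaxProd_nonneg α N _)
  rcases lt_or_gt_of_ne hα2 with hA | hB
  · -- α < 1/2, q = 1/2
    have hqq : q = 1/2 := by rw [hq]; exact min_eq_left (by linarith)
    have hp : (0:ℝ) < 1-α := by linarith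
    have hp2 : (0:ℝ) < (1-α)^2/8 := by positivity
    have hhtend : Tendsto (fun τ : ℝ => Real.exp (-((1-α)^2/8 * τ^2))) atTop (nhds 0) := by
      have h1 : Tendsto (fun τ:ℝ => (1-α)^2/8 * τ^2) atTop atTop :=
        (tendsto_pow_atTop two_ne_zero).const_mul_atTop hp2
      exact Real.tendsto_exp_atBot.comp (tendsto_neg_atTop_atBot.comp h1)
    apply tendsto_of_tendsto_of_tendsto_of_le_of_le' tendsto_const_nhds hhtend
    · exact Eventually.of_forall hL0
    · filter_upwards [eventually_ge_atTop (1:ℝ)] with τ hτ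
      apply Filter.limsup_le_of_le (hcob τ)
      filter_upwards [aux_caseA α hα0 hA τ hτ] with N hN
      rw [hqq]
      exact hN
  · -- α > 1/2, q = 1-α
    have hqq : q = 1-α := by rw [hq]; exact min_eq_right (by linarith)
    have hp : (0:ℝ) < 1-α := by linarith
    have hp2 : (0:ℝ) < (1-α)^2/9216 := by positivity
    have hhtend : Tendsto (fun τ : ℝ => Real.exp (-((1-α)^2/9216 * (6*τ)^(α⁻¹)))) atTop (nhds 0) := by
      have h6 : Tendsto (fun τ:ℝ => 6*τ) atTop atTop :=
        tendsto_id.const_mul_atTop (by norm_num)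
      have hrinv : (0:ℝ) < α⁻¹ := by
        have : (0:ℝ) < α := by linarith
        positivity
      have h1 : Tendsto (fun τ:ℝ => (1-α)^2/9216 * (6*τ)^(α⁻¹)) atTop atTop :=
        ((tendsto_rpow_atTop hrinv).comp h6).const_mul_atTop hp2
      exact Real.tendsto_exp_atBot.comp (tendsto_neg_atTop_atBot.comp h1)
    apply tendsto_of_tendsto_of_tendsto_of_le_of_le' tendsto_const_nhds hhtend
    · exact Eventually.of_forall hL0
    · filter_upwards [eventually_ge_atTop (1:ℝ)] with τ hτ
      apply Filter.limsup_le_of_le (hcob τ)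
      filter_upwards [aux_caseB α hB hα1 τ hτ] with N hN
      rw [hqq]
      exact hN
end
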